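/- Let H be a Hilbert space and C, C' nonempty closed convex subsets of H. For v̄ ∈ H the projections P_C(v̄), P_{C'}(v̄) satisfy a Hölder estimate with exponent 1/2 with respect to the bounded Hausdorff distance: there exists ℓ_H > 0 (depending on v̄ and a bound on the sets) such that ‖P_C(v̄) − P_{C'}(v̄)‖ ≤ ℓ_H [d_ρ(C, C')]^{1/2}, where d_ρ denotes the ρ-bounded Hausdorff distance. -/

import Mathlib

open Metric

/-- From the minimality property, the variational inequality for the projection. -/
lemma proj_inner_le {H : Type*} [NormedAddCommGroup H] [InnerProductSpace ℝ H]
    {C : Set H} (hC : Convex ℝ C) {vbar x : H} (hx : x ∈ C)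
    (hmin : ∀ z ∈ C, ‖x - vbar‖ ≤ ‖z - vbar‖) :
    ∀ w ∈ C, inner ℝ (vbar - x) (w - x) ≤ (0 : ℝ) := by
  have : ‖vbar - x‖ = ⨅ w : C, ‖vbar - w‖ := by
    haveI : Nonempty C := ⟨⟨x, hx⟩⟩
    refine le_antisymm (le_ciInf fun w => ?_)
      (ciInf_le (⟨0, Set.forall_mem_range.2 fun _ => norm_nonneg _⟩ : BddBelow (Set.range fun w : C => ‖vbar - (w : H)‖)) ⟨x, hx⟩)
    rw [norm_sub_rev vbar x, norm_sub_rev vbar (w : H)]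
    exact hmin w w.2
  exact (norm_eq_iInf_iff_real_inner_le_zero hC hx).1 this

theorem stmt_7 {H : Type*} [NormedAddCommGroup H] [InnerProductSpace ℝ H]
    [CompleteSpace H] (vbar : H) (ρ : ℝ) (hρ : ‖vbar‖ ≤ ρ) :
    ∃ ℓH > (0 : ℝ), ∀ C C' : Set H,
      C.Nonempty → C'.Nonempty → IsClosed C → IsClosed C' →
      Convex ℝ C → Convex ℝ C' →
      ∀ x x' : H,
        (x ∈ C ∧ ∀ z ∈ C, ‖x - vbar‖ ≤ ‖z - vbar‖) →
        (x' ∈ C' ∧ ∀ z ∈ C', ‖x' - vbar‖ ≤ ‖z - vbar‖) →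
        ‖x‖ ≤ ρ → ‖x'‖ ≤ ρ →
        ‖x - x'‖ ≤ ℓH * Real.sqrt
          (Metric.hausdorffDist (C ∩ Metric.closedBall 0 ρ)
            (C' ∩ Metric.closedBall 0 ρ)) := by
  have hρ0 : (0 : ℝ) ≤ ρ := le_trans (norm_nonneg _) hρ
  refine ⟨Real.sqrt (2 * ρ) + 4 * Real.sqrt ρ + 1, by positivity, ?_⟩
  intro C C' hCne hC'ne hCc hC'c hCconv hC'conv x x' hx hx' hxρ hx'ρ
  obtain ⟨hxC, hxmin⟩ := hx
  obtain ⟨hx'C, hx'min⟩ := hx'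
  set B := Metric.closedBall (0 : H) ρ with hB
  set d := Metric.hausdorffDist (C ∩ B) (C' ∩ B) with hd
  have hxB : x ∈ C ∩ B := ⟨hxC, by simpa [hB, mem_closedBall, dist_zero_right] using hxρ⟩
  have hx'B : x' ∈ C' ∩ B := ⟨hx'C, by simpa [hB, mem_closedBall, dist_zero_right] using hx'ρ⟩
  have hbound : ∀ a ∈ (C ∩ B), ∀ b ∈ (C' ∩ B), dist a b ≤ 2 * ρ := by
    intro a ha b hb
    have h1 : ‖a‖ ≤ ρ := by simpa [hB, mem_closedBall, dist_zero_right] using ha.2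
    have h2 : ‖b‖ ≤ ρ := by simpa [hB, mem_closedBall, dist_zero_right] using hb.2
    calc dist a b = ‖a - b‖ := dist_eq_norm a b
    _ ≤ ‖a‖ + ‖b‖ := norm_sub_le _ _
    _ ≤ 2 * ρ := by linarith
  -- d is finite and d ≤ 2ρ
  have hne_top : EMetric.hausdorffEdist (C ∩ B) (C' ∩ B) ≠ ⊤ := by
    apply Metric.hausdorffEdist_ne_top_of_nonempty_of_bounded ⟨x, hxB⟩ ⟨x', hx'B⟩
    · exact (Metric.isBounded_closedBall).subset (Set.inter_subset_right)
    · exact (Metric.isBounded_closedBall).subset (Set.inter_subset_right)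
  have hd0 : 0 ≤ d := Metric.hausdorffDist_nonneg
  have hd2ρ : d ≤ 2 * ρ := by
    apply Metric.hausdorffDist_le_of_mem_dist (by linarith)
    · exact fun a ha => ⟨x', hx'B, hbound a ha x' hx'B⟩
    · exact fun b hb => ⟨x, hxB, by rw [dist_comm]; exact hbound x hxB b hb⟩
  -- nearest point y of x in C' ∩ B, with ‖x - y‖ ≤ d
  have hC'B_conv : Convex ℝ (C' ∩ B) := hC'conv.inter (convex_closedBall _ _)
  have hC'B_closed : IsClosed (C' ∩ B) := hC'c.inter Metric.isClosed_closedBall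
  obtain ⟨y, hyB, hy⟩ := exists_norm_eq_iInf_of_complete_convex ⟨x', hx'B⟩
    hC'B_closed.isComplete hC'B_conv x
  haveI : Nonempty ↥(C' ∩ B) := ⟨⟨x', hx'B⟩⟩
  have hxy : ‖x - y‖ ≤ d := by
    have h1 : ‖x - y‖ ≤ Metric.infDist x (C' ∩ B) := by
      rw [hy, Metric.infDist_eq_iInf]
      exact le_ciInf fun w => by
        rw [dist_eq_norm]
        exact ciInf_le ⟨0, Set.forall_mem_range.2 fun _ => norm_nonneg _⟩ w
    exact h1.trans (Metric.infDist_le_hausdorffDist_of_mem hxB hne_top)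
  -- nearest point z of x' in C ∩ B, with ‖x' - z‖ ≤ d
  have hCB_conv : Convex ℝ (C ∩ B) := hCconv.inter (convex_closedBall _ _)
  have hCB_closed : IsClosed (C ∩ B) := hCc.inter Metric.isClosed_closedBall
  obtain ⟨z, hzB, hz⟩ := exists_norm_eq_iInf_of_complete_convex ⟨x, hxB⟩
    hCB_closed.isComplete hCB_conv x'
  haveI : Nonempty ↥(C ∩ B) := ⟨⟨x, hxB⟩⟩
  have hx'z : ‖x' - z‖ ≤ d := by
    have h1 : ‖x' - z‖ ≤ Metric.infDist x' (C ∩ B) := by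
      rw [hz, Metric.infDist_eq_iInf]
      exact le_ciInf fun w => by
        rw [dist_eq_norm]
        exact ciInf_le ⟨0, Set.forall_mem_range.2 fun _ => norm_nonneg _⟩ w
    have h2 := Metric.infDist_le_hausdorffDist_of_mem hx'B
      (by rwa [EMetric.hausdorffEdist_comm] : Metric.hausdorffEDist (C' ∩ B) (C ∩ B) ≠ ⊤)
    rw [Metric.hausdorffDist_comm] at h2
    exact h1.trans h2
  -- distance comparisons
  have h1 : ‖x - vbar‖ ≤ ‖x' - vbar‖ + d := by
    have := hxmin z hzB.1
    have h2 : ‖z - vbar‖ ≤ ‖x' - vbar‖ + ‖x' - z‖ := by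
      have : z - vbar = (x' - vbar) - (x' - z) := by abel
      rw [this]
      exact norm_sub_le _ _
    linarith
  have hyv : ‖y - vbar‖ ≤ ‖x' - vbar‖ + 2 * d := by
    have h2 : ‖y - vbar‖ ≤ ‖x - vbar‖ + ‖x - y‖ := by
      have : y - vbar = (x - vbar) - (x - y) := by abel
      rw [this]
      exact norm_sub_le _ _
    linarith
  -- variational inequality for x' and y ∈ C'
  have hvar : inner ℝ (vbar - x') (y - x') ≤ (0 : ℝ) :=
    proj_inner_le hC'conv hx'C hx'min y hyB.1
  have hkey : ‖y - x'‖ ^ 2 ≤ ‖y - vbar‖ ^ 2 - ‖x' - vbar‖ ^ 2 := by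
    have expand : ‖y - vbar‖ ^ 2
        = ‖y - x'‖ ^ 2 - 2 * inner ℝ (y - x') (vbar - x') + ‖vbar - x'‖ ^ 2 := by
      have : y - vbar = (y - x') - (vbar - x') := by abel
      rw [this, norm_sub_sq_real]
    rw [real_inner_comm] at expand
    have hnr2 : ‖vbar - x'‖ ^ 2 = ‖x' - vbar‖ ^ 2 := by rw [norm_sub_rev]
    linarith [hvar, expand]
  have hx'v : ‖x' - vbar‖ ≤ 2 * ρ := by
    calc ‖x' - vbar‖ ≤ ‖x'‖ + ‖vbar‖ := norm_sub_le _ _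
    _ ≤ 2 * ρ := by linarith
  -- ‖y - x'‖² ≤ 16 ρ d
  have hsq : ‖y - x'‖ ^ 2 ≤ 16 * ρ * d := by
    nlinarith [hkey, hyv, hx'v, hd2ρ, hd0, norm_nonneg (y - vbar), norm_nonneg (x' - vbar)]
  have hsd : Real.sqrt d * Real.sqrt d = d := Real.mul_self_sqrt hd0
  have hsρ : Real.sqrt ρ * Real.sqrt ρ = ρ := Real.mul_self_sqrt hρ0
  have hyx' : ‖y - x'‖ ≤ 4 * Real.sqrt ρ * Real.sqrt d := by
    have h4 : (0:ℝ) ≤ 4 * Real.sqrt ρ * Real.sqrt d := by positivity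
    nlinarith [hsq, norm_nonneg (y - x'), h4]
  have hdle : d ≤ Real.sqrt (2 * ρ) * Real.sqrt d := by
    have h1 : Real.sqrt d ≤ Real.sqrt (2 * ρ) := Real.sqrt_le_sqrt hd2ρ
    nlinarith [Real.sqrt_nonneg d, hsd]
  calc ‖x - x'‖ ≤ ‖x - y‖ + ‖y - x'‖ := by
        have : x - x' = (x - y) + (y - x') := by abel
        rw [this]; exact norm_add_le _ _
  _ ≤ Real.sqrt (2 * ρ) * Real.sqrt d + 4 * Real.sqrt ρ * Real.sqrt d := by
        linarith [hxy.trans hdle]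
  _ ≤ (Real.sqrt (2 * ρ) + 4 * Real.sqrt ρ + 1) * Real.sqrt d := by
        nlinarith [Real.sqrt_nonneg d]
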